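/- Let Y_1,…,Y_T be exchangeable real-valued random variables that are almost surely pairwise distinct. For t = 1,…,T define the sequential rank R_t := #{s ≤ t : Y_s ≤ Y_t}. Then R_1,…,R_T are mutually independent and, for each t, R_t is uniformly distributed on {1,…,t}. -/

import Mathlib

open MeasureTheory ProbabilityTheory
open scoped ENNReal NNReal

namespace Stmt7
open Finset

variable {T : ℕ}

/-- The sequential rank of `t` given that the order of values is given by `σ x ≤ σ y`. -/
def rnk (σ : Equiv.Perm (Fin T)) (t : Fin T) : ℕ :=
  (Finset.univ.filter (fun s : Fin T => s ≤ t ∧ σ s ≤ σ t)).card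

lemma rnk_pos (σ : Equiv.Perm (Fin T)) (t : Fin T) : 1 ≤ rnk σ t := by
  have ht : t ∈ Finset.univ.filter (fun s : Fin T => s ≤ t ∧ σ s ≤ σ t) := by simp
  exact Finset.card_pos.mpr ⟨t, ht⟩

lemma rnk_le (σ : Equiv.Perm (Fin T)) (t : Fin T) : rnk σ t ≤ (t : ℕ) + 1 := by
  have h : (Finset.univ.filter (fun s : Fin T => s ≤ t ∧ σ s ≤ σ t)) ⊆ Finset.Iic t := by
    intro s hs; simp only [mem_filter] at hs; simpa using hs.2.1
  calc rnk σ t ≤ (Finset.Iic t).card := Finset.card_le_card h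
    _ = (t : ℕ) + 1 := Fin.card_Iic t

lemma rnk_eq_succ (σ : Equiv.Perm (Fin T)) (b : Fin T) :
    rnk σ b = (Finset.univ.filter (fun v : Fin T => v < b ∧ σ v ≤ σ b)).card + 1 := by
  have : (Finset.univ.filter (fun s : Fin T => s ≤ b ∧ σ s ≤ σ b))
      = insert b (Finset.univ.filter (fun v : Fin T => v < b ∧ σ v ≤ σ b)) := by
    ext s
    simp only [mem_filter, mem_univ, true_and, mem_insert]
    constructor
    · rintro ⟨hs, hσ⟩
      rcases eq_or_lt_of_le hs with rfl | h
      · exact Or.inl rfl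
      · exact Or.inr ⟨h, hσ⟩
    · rintro (rfl | ⟨h, hσ⟩)
      · exact ⟨le_refl _, le_refl _⟩
      · exact ⟨le_of_lt h, hσ⟩
  rw [rnk, this, Finset.card_insert_of_notMem (by simp)]

lemma lt_iff_card (σ : Equiv.Perm (Fin T)) {a b : Fin T} (hab : a < b) :
    σ a < σ b ↔
      (Finset.univ.filter (fun v : Fin T => v < b ∧ σ v ≤ σ a)).card < rnk σ b := by
  rw [rnk_eq_succ]
  constructor
  · intro h
    have hsub : (Finset.univ.filter (fun v : Fin T => v < b ∧ σ v ≤ σ a))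
        ⊆ (Finset.univ.filter (fun v : Fin T => v < b ∧ σ v ≤ σ b)) := by
      intro v hv
      simp only [mem_filter, mem_univ, true_and] at hv ⊢
      exact ⟨hv.1, hv.2.trans h.le⟩
    exact Nat.lt_succ_of_le (Finset.card_le_card hsub)
  · intro h
    by_contra hc
    have hne : σ a ≠ σ b := fun he => absurd (σ.injective he) hab.ne
    have hba : σ b < σ a := lt_of_le_of_ne (not_lt.mp hc) (Ne.symm hne)
    have hsub : insert a (Finset.univ.filter (fun v : Fin T => v < b ∧ σ v ≤ σ b))
        ⊆ (Finset.univ.filter (fun v : Fin T => v < b ∧ σ v ≤ σ a)) := by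
      intro v hv
      simp only [mem_insert, mem_filter, mem_univ, true_and] at hv ⊢
      rcases hv with rfl | ⟨h1, h2⟩
      · exact ⟨hab, le_refl _⟩
      · exact ⟨h1, h2.trans hba.le⟩
    have hnm : a ∉ (Finset.univ.filter (fun v : Fin T => v < b ∧ σ v ≤ σ b)) := by
      simp only [mem_filter, mem_univ, true_and, not_and]
      intro _; exact not_le.mpr hba
    have := Finset.card_le_card hsub
    rw [Finset.card_insert_of_notMem hnm] at this
    omega

lemma le_iff_of_rnk_eq {σ τ : Equiv.Perm (Fin T)} (h : ∀ t, rnk σ t = rnk τ t) :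
    ∀ a b : Fin T, (σ a ≤ σ b ↔ τ a ≤ τ b) := by
  suffices H : ∀ m : ℕ, ∀ a b : Fin T, (a : ℕ) ≤ m → (b : ℕ) ≤ m →
      (σ a ≤ σ b ↔ τ a ≤ τ b) by
    intro a b
    exact H (max a b) a b (le_max_left _ _) (le_max_right _ _)
  intro m
  induction m with
  | zero =>
    intro a b ha hb
    have : a = b := Fin.ext (by omega)
    subst this; simp
  | succ m ih =>
    have key : ∀ a b : Fin T, a < b → (b : ℕ) ≤ m + 1 → (σ a < σ b ↔ τ a < τ b) := by
      intro a b hab hb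
      rcases Nat.lt_or_ge (b : ℕ) (m + 1) with hbm | hbm
      · have hb' : (b : ℕ) ≤ m := by omega
        have ha' : (a : ℕ) ≤ m := by
          have := Fin.lt_iff_val_lt_val.mp hab; omega
        constructor
        · intro hlt
          exact lt_of_le_of_ne ((ih a b ha' hb').mp hlt.le)
            (fun he => absurd (τ.injective he) hab.ne)
        · intro hlt
          exact lt_of_le_of_ne ((ih a b ha' hb').mpr hlt.le)
            (fun he => absurd (σ.injective he) hab.ne)
      · have ha' : (a : ℕ) ≤ m := by
          have := Fin.lt_iff_val_lt_val.mp hab; omega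
        rw [lt_iff_card σ hab, lt_iff_card τ hab, h b]
        have hset : (Finset.univ.filter (fun v : Fin T => v < b ∧ σ v ≤ σ a))
            = (Finset.univ.filter (fun v : Fin T => v < b ∧ τ v ≤ τ a)) := by
          apply Finset.filter_congr
          intro v _
          constructor
          · rintro ⟨hv, hva⟩
            refine ⟨hv, ?_⟩
            have hv' : (v : ℕ) ≤ m := by
              have := Fin.lt_iff_val_lt_val.mp hv; omega
            exact (ih v a hv' ha').mp hva
          · rintro ⟨hv, hva⟩
            refine ⟨hv, ?_⟩
            have hv' : (v : ℕ) ≤ m := by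
              have := Fin.lt_iff_val_lt_val.mp hv; omega
            exact (ih v a hv' ha').mpr hva
        rw [hset]
    intro a b ha hb
    rcases lt_trichotomy a b with hlt | rfl | hgt
    · have hne : σ a ≠ σ b := fun he => absurd (σ.injective he) hlt.ne
      have hne' : τ a ≠ τ b := fun he => absurd (τ.injective he) hlt.ne
      rw [hne.le_iff_lt, hne'.le_iff_lt]
      exact key a b hlt hb
    · simp
    · rw [← not_lt, ← not_lt, key b a hgt ha]

lemma rnk_injective :
    Function.Injective (fun σ : Equiv.Perm (Fin T) => rnk σ) := by
  intro σ τ h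
  have h' := le_iff_of_rnk_eq (fun t => congrFun h t)
  have hmono : Monotone (fun x => τ (σ.symm x)) := by
    intro x y hxy
    exact (h' (σ.symm x) (σ.symm y)).mp (by simpa using hxy)
  have hsm : StrictMono (fun x => τ (σ.symm x)) :=
    hmono.strictMono_of_injective (τ.injective.comp σ.symm.injective)
  have hrange : Set.range (fun x => τ (σ.symm x)) = Set.range (id : Fin T → Fin T) := by
    have h1 : Set.range (fun x => τ (σ.symm x)) = Set.range (⇑τ ∘ ⇑σ.symm) := rfl
    rw [h1, σ.symm.surjective.range_comp, τ.surjective.range_eq, Set.range_id]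
  haveI : WellFoundedLT (Fin T) := Finite.to_wellFoundedLT
  have heq := (hsm.range_inj strictMono_id).mp hrange
  ext x
  have hx := congrFun heq (σ x)
  simp only [Equiv.symm_apply_apply, id_eq] at hx
  exact congrArg Fin.val hx.symm

def pbox (T : ℕ) : Finset (Fin T → ℕ) :=
  Fintype.piFinset (fun t => Finset.Icc 1 ((t : ℕ) + 1))

lemma card_pbox : (pbox T).card = Nat.factorial T := by
  rw [pbox, Fintype.card_piFinset]
  have : ∀ t : Fin T, (Finset.Icc 1 ((t : ℕ) + 1)).card = (t : ℕ) + 1 := by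
    intro t; rw [Nat.card_Icc]; omega
  rw [Finset.prod_congr rfl (fun t _ => this t),
    Fin.prod_univ_eq_prod_range (fun i => i + 1)]
  exact Finset.prod_range_add_one_eq_factorial T

lemma rnk_image :
    (Finset.univ.image (fun σ : Equiv.Perm (Fin T) => rnk σ)) = pbox T := by
  apply Finset.eq_of_subset_of_card_le
  · intro r hr
    rw [Finset.mem_image] at hr
    obtain ⟨σ, _, rfl⟩ := hr
    rw [pbox, Fintype.mem_piFinset]
    intro t
    rw [Finset.mem_Icc]
    exact ⟨rnk_pos σ t, rnk_le σ t⟩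
  · rw [card_pbox, Finset.card_image_of_injective _ rnk_injective]
    simp [Fintype.card_perm]

open scoped Classical in
lemma count_perm (p : (Fin T → ℕ) → Prop) :
    (Finset.univ.filter (fun σ : Equiv.Perm (Fin T) => p (rnk σ))).card
      = ((pbox T).filter p).card := by
  rw [← rnk_image, Finset.filter_image,
    Finset.card_image_of_injective _ rnk_injective]

open scoped Classical in
lemma card_filter_pbox (S : Finset (Fin T)) (B : Fin T → Set ℕ) :
    (((pbox T).filter (fun r => ∀ i ∈ S, r i ∈ B i)).card : ℕ)
      = (∏ i ∈ S, ((Finset.Icc 1 ((i : ℕ) + 1)).filter (· ∈ B i)).card)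
        * ∏ i ∈ Sᶜ, ((i : ℕ) + 1) := by
  classical
  have hset : (pbox T).filter (fun r => ∀ i ∈ S, r i ∈ B i)
      = Fintype.piFinset (fun t => if t ∈ S then
          (Finset.Icc 1 ((t : ℕ) + 1)).filter (· ∈ B t)
        else Finset.Icc 1 ((t : ℕ) + 1)) := by
    ext r
    simp only [Finset.mem_filter, pbox, Fintype.mem_piFinset]
    constructor
    · rintro ⟨h1, h2⟩ t
      by_cases ht : t ∈ S
      · rw [if_pos ht, Finset.mem_filter]
        exact ⟨h1 t, h2 t ht⟩
      · rw [if_neg ht]; exact h1 t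
    · intro h
      constructor
      · intro t
        have := h t
        split_ifs at this with ht
        · exact (Finset.mem_filter.mp this).1
        · exact this
      · intro i hi
        have := h i
        rw [if_pos hi, Finset.mem_filter] at this
        exact this.2
  rw [hset, Fintype.card_piFinset, ← Finset.prod_mul_prod_compl S]
  congr 1
  · exact Finset.prod_congr rfl (fun i hi => by rw [if_pos hi])
  · refine Finset.prod_congr rfl (fun i hi => ?_)
    rw [if_neg (Finset.mem_compl.mp hi), Nat.card_Icc]
    omega

end Stmt7

/-- A finite family of random elements is exchangeable if its joint law is invariant under
every permutation of the index set. -/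
def Exchangeable {Ω ι α : Type*} [MeasurableSpace Ω] [MeasurableSpace α]
    (P : Measure Ω) (X : ι → Ω → α) : Prop :=
  ∀ π : Equiv.Perm ι,
    Measure.map (fun ω => fun i => X (π i) ω) P = Measure.map (fun ω => fun i => X i ω) P

/-- If `Y_1,…,Y_T` (here 0-based, indexed by `Fin T`) are exchangeable and
a.s. pairwise distinct, then the sequential ranks `R_t := #{s ≤ t : Y_s ≤ Y_t}` are
mutually independent and each `R_t` is uniform on `{1,…,t}` (here `{1,…,(t:ℕ)+1}`
for the 0-based index `t`). -/
theorem stmt_7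
    {Ω : Type*} [mΩ : MeasurableSpace Ω] (P : Measure Ω) [IsProbabilityMeasure P]
    (T : ℕ) (hT : 1 ≤ T)
    (Y : Fin T → Ω → ℝ) (hY : ∀ s, Measurable (Y s))
    (hexch : Exchangeable P Y)
    (hdist : ∀ᵐ ω ∂P, ∀ s s' : Fin T, s ≠ s' → Y s ω ≠ Y s' ω)
    (R : Fin T → Ω → ℕ)
    (hR : ∀ t ω, R t ω
      = (Finset.univ.filter (fun s : Fin T => s ≤ t ∧ Y s ω ≤ Y t ω)).card) :
    iIndepFun R P ∧
      ∀ t : Fin T, ∀ r : ℕ, 1 ≤ r → r ≤ (t : ℕ) + 1 →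
        P {ω | R t ω = r} = (((t : ℕ) : ℝ≥0∞) + 1)⁻¹ := by

  classical
  -- the ordering events
  set E : Equiv.Perm (Fin T) → Set Ω := fun π => {ω | StrictMono fun i => Y (π i) ω} with hE
  have hYm : ∀ π : Equiv.Perm (Fin T), Measurable (fun ω => fun i => Y (π i) ω) :=
    fun π => measurable_pi_lambda _ fun i => hY _
  have hM : MeasurableSet {y : Fin T → ℝ | StrictMono y} := by
    have hrw : {y : Fin T → ℝ | StrictMono y}
        = ⋂ (i : Fin T) (j : Fin T) (_ : i < j), {y : Fin T → ℝ | y i < y j} := by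
      ext y
      simp only [Set.mem_setOf_eq, Set.mem_iInter]
      exact ⟨fun h i j hij => h hij, fun h a b hab => h a b hab⟩
    rw [hrw]
    exact MeasurableSet.iInter fun i => MeasurableSet.iInter fun j =>
      MeasurableSet.iInter fun _ =>
        measurableSet_lt (measurable_pi_apply i) (measurable_pi_apply j)
  have hEmeas : ∀ π, MeasurableSet (E π) := fun π => (hYm π) hM
  have hEP : ∀ π, P (E π) = P (E 1) := by
    intro π
    have h1 : P (E π) = Measure.map (fun ω => fun i => Y (π i) ω) P {y | StrictMono y} := by
      rw [Measure.map_apply (hYm π) hM]; rfl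
    have h2 : P (E 1) = Measure.map (fun ω => fun i => Y i ω) P {y | StrictMono y} := by
      rw [Measure.map_apply (measurable_pi_lambda _ fun i => hY i) hM]; rfl
    rw [h1, h2, hexch π]
  haveI : WellFoundedLT (Fin T) := Finite.to_wellFoundedLT
  have hdisj : ∀ π π' : Equiv.Perm (Fin T), π ≠ π' → Disjoint (E π) (E π') := by
    intro π π' hne
    rw [Set.disjoint_left]
    intro ω h1 h2
    apply hne
    have hy1 : StrictMono ((fun i => Y i ω) ∘ ⇑π) := h1
    have hy2 : StrictMono ((fun i => Y i ω) ∘ ⇑π') := h2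
    have hr : Set.range ((fun i => Y i ω) ∘ ⇑π) = Set.range ((fun i => Y i ω) ∘ ⇑π') := by
      rw [π.surjective.range_comp, π'.surjective.range_comp]
    have heq := (hy1.range_inj hy2).mp hr
    have hyinj : Function.Injective (fun i => Y i ω) := by
      have hcomp : (fun i => Y i ω) = ((fun i => Y i ω) ∘ ⇑π) ∘ ⇑π.symm := by
        funext i; simp [Function.comp]
      rw [hcomp]
      exact hy1.injective.comp π.symm.injective
    apply Equiv.ext
    intro i
    exact hyinj (congrFun heq i)
  have hcov : ∀ ω, (∀ s s' : Fin T, s ≠ s' → Y s ω ≠ Y s' ω) → ∃ π, ω ∈ E π := by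
    intro ω hdis
    have hyinj : Function.Injective (fun i => Y i ω) := by
      intro a b hab
      by_contra hne
      exact hdis a b hne hab
    refine ⟨Tuple.sort (fun i => Y i ω), ?_⟩
    have hm : Monotone ((fun i => Y i ω) ∘ Tuple.sort (fun i => Y i ω)) :=
      Tuple.monotone_sort _
    exact hm.strictMono_of_injective
      (hyinj.comp (Tuple.sort (fun i => Y i ω)).injective)
  have hnull : P ((⋃ π : Equiv.Perm (Fin T), E π)ᶜ) = 0 := by
    have h0 : P {ω | ¬ ∀ s s' : Fin T, s ≠ s' → Y s ω ≠ Y s' ω} = 0 := ae_iff.mp hdist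
    apply measure_mono_null _ h0
    intro ω hω
    simp only [Set.mem_compl_iff, Set.mem_iUnion, not_exists] at hω
    intro hdis
    obtain ⟨π, hπ⟩ := hcov ω hdis
    exact hω π hπ
  have hU : P (⋃ π : Equiv.Perm (Fin T), E π) = 1 := by
    have hadd := measure_add_measure_compl (μ := P) (MeasurableSet.iUnion hEmeas)
    rw [hnull, add_zero, measure_univ] at hadd
    exact hadd
  have hpd : Set.PairwiseDisjoint (↑(Finset.univ : Finset (Equiv.Perm (Fin T)))) E :=
    fun π _ π' _ hne => hdisj π π' hne
  have hsum : ∑ π : Equiv.Perm (Fin T), P (E π) = 1 := by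
    rw [← measure_biUnion_finset hpd (fun π _ => hEmeas π)]
    simpa using hU
  have hfac0 : ((Nat.factorial T : ℕ) : ℝ≥0∞) ≠ 0 := by
    exact_mod_cast Nat.cast_ne_zero.mpr (Nat.factorial_pos T).ne'
  have hfactop : ((Nat.factorial T : ℕ) : ℝ≥0∞) ≠ ∞ := ENNReal.natCast_ne_top _
  have hEfac : ∀ π, P (E π) = ((Nat.factorial T : ℕ) : ℝ≥0∞)⁻¹ := by
    have hsum' : ((Nat.factorial T : ℕ) : ℝ≥0∞) * P (E 1) = 1 := by
      have h5 : ∑ π : Equiv.Perm (Fin T), P (E π)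
          = ∑ _π : Equiv.Perm (Fin T), P (E 1) :=
        Finset.sum_congr rfl (fun π _ => hEP π)
      rw [h5, Finset.sum_const, Finset.card_univ, Fintype.card_perm,
        Fintype.card_fin, nsmul_eq_mul] at hsum
      rw [← hsum]
    intro π
    rw [hEP π]
    calc P (E 1) = (((Nat.factorial T : ℕ) : ℝ≥0∞)⁻¹ * ((Nat.factorial T : ℕ) : ℝ≥0∞))
        * P (E 1) := by rw [ENNReal.inv_mul_cancel hfac0 hfactop, one_mul]
      _ = ((Nat.factorial T : ℕ) : ℝ≥0∞)⁻¹ := by rw [mul_assoc, hsum', mul_one]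
  -- ranks on the ordering events
  have hRE : ∀ (π : Equiv.Perm (Fin T)) (ω : Ω), ω ∈ E π →
      ∀ t, R t ω = Stmt7.rnk π.symm t := by
    intro π ω hω t
    rw [hR, Stmt7.rnk]
    apply congrArg Finset.card
    apply Finset.filter_congr
    intro s _
    have hmono : StrictMono (fun i => Y (π i) ω) := hω
    have hYs : ∀ u : Fin T, Y u ω = (fun i => Y (π i) ω) (π.symm u) := by
      intro u; simp
    refine and_congr_right (fun _ => ?_)
    rw [hYs s, hYs t]
    exact hmono.le_iff_le
  -- measurability of the ranks
  have hRmeas : ∀ t, Measurable (R t) := by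
    intro t
    have hrw : R t = fun ω => ∑ s : Fin T, if s ≤ t ∧ Y s ω ≤ Y t ω then 1 else 0 := by
      funext ω; rw [hR, Finset.card_filter]
    rw [hrw]
    apply Finset.measurable_sum
    intro s _
    refine Measurable.ite ?_ measurable_const measurable_const
    by_cases hst : s ≤ t
    · simp only [hst, true_and]
      exact measurableSet_le (hY s) (hY t)
    · simp only [hst, false_and, Set.setOf_false]
      exact MeasurableSet.empty
  -- master formula
  have master : ∀ p : (Fin T → ℕ) → Prop,
      P {ω | p (fun t => R t ω)} =
        (((Stmt7.pbox T).filter p).card : ℝ≥0∞)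
          * (((Nat.factorial T : ℕ) : ℝ≥0∞))⁻¹ := by
    intro p
    set D : Set Ω := {ω | p (fun t => R t ω)} with hD
    have hDmeas : MeasurableSet D := by
      have hrw : D = ⋃ v : {v : Fin T → ℕ // p v},
          ⋂ t, (R t) ⁻¹' {(v : Fin T → ℕ) t} := by
        ext ω
        simp only [hD, Set.mem_setOf_eq, Set.mem_iUnion, Set.mem_iInter,
          Set.mem_preimage, Set.mem_singleton_iff]
        constructor
        · intro h
          exact ⟨⟨fun t => R t ω, h⟩, fun t => rfl⟩
        · rintro ⟨⟨v, hv⟩, h⟩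
          have : (fun t => R t ω) = v := funext h
          rw [this]; exact hv
      rw [hrw]
      exact MeasurableSet.iUnion fun v => MeasurableSet.iInter fun t =>
        (hRmeas t) (measurableSet_singleton _)
    have h1 : P D = P (D ∩ ⋃ π : Equiv.Perm (Fin T), E π) :=
      (measure_inter_conull hnull).symm
    have h2 : D ∩ (⋃ π : Equiv.Perm (Fin T), E π)
        = ⋃ π ∈ (Finset.univ : Finset (Equiv.Perm (Fin T))), D ∩ E π := by
      simp [Set.inter_iUnion]
    have h3 : P D = ∑ π : Equiv.Perm (Fin T), P (D ∩ E π) := by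
      rw [h1, h2, measure_biUnion_finset
        (fun π hπ π' hπ' hne => ((hdisj π π' hne).mono
          Set.inter_subset_right Set.inter_subset_right))
        (fun π _ => hDmeas.inter (hEmeas π))]
    have h4 : ∀ π : Equiv.Perm (Fin T),
        P (D ∩ E π) = if p (Stmt7.rnk π.symm) then ((Nat.factorial T : ℕ) : ℝ≥0∞)⁻¹
          else 0 := by
      intro π
      split_ifs with hπ
      · rw [← hEfac π]
        congr 1
        ext ω
        simp only [Set.mem_inter_iff, hD, Set.mem_setOf_eq]
        constructor
        · rintro ⟨_, h⟩; exact h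
        · intro h
          refine ⟨?_, h⟩
          have : (fun t => R t ω) = Stmt7.rnk π.symm := funext (hRE π ω h)
          rw [this]; exact hπ
      · have hem : D ∩ E π = ∅ := by
          ext ω
          simp only [Set.mem_inter_iff, hD, Set.mem_setOf_eq, Set.mem_empty_iff_false,
            iff_false, not_and]
          intro hp hω
          apply hπ
          have : (fun t => R t ω) = Stmt7.rnk π.symm := funext (hRE π ω hω)
          rw [← this]; exact hp
        rw [hem, measure_empty]
    have hcard : (Finset.univ.filter
          (fun π : Equiv.Perm (Fin T) => p (Stmt7.rnk π.symm))).card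
        = ((Stmt7.pbox T).filter p).card := by
      have hbij : (Finset.univ.filter
            (fun π : Equiv.Perm (Fin T) => p (Stmt7.rnk π.symm))).card
          = (Finset.univ.filter (fun σ : Equiv.Perm (Fin T) => p (Stmt7.rnk σ))).card := by
        apply Finset.card_equiv
          ⟨fun π : Equiv.Perm (Fin T) => π.symm, fun π => π.symm,
            fun π => Equiv.symm_symm π, fun π => Equiv.symm_symm π⟩
        intro π
        simp
      rw [hbij]
      exact Stmt7.count_perm p
    rw [h3, Finset.sum_congr rfl (fun π _ => h4 π), ← Finset.sum_filter,
      Finset.sum_const, nsmul_eq_mul, hcard]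
  -- general product formula
  have hfacprod : ((Nat.factorial T : ℕ) : ℝ≥0∞)
      = ∏ i : Fin T, (((i : ℕ) : ℝ≥0∞) + 1) := by
    rw [← Finset.prod_range_add_one_eq_factorial T]
    push_cast
    rw [Fin.prod_univ_eq_prod_range (fun i => ((i : ℕ) : ℝ≥0∞) + 1)]
  have hF0 : ∀ i : Fin T, (((i : ℕ) : ℝ≥0∞) + 1) ≠ 0 := by
    intro i
    exact (lt_of_lt_of_le zero_lt_one le_add_self).ne'
  have hFtop : ∀ i : Fin T, (((i : ℕ) : ℝ≥0∞) + 1) ≠ ∞ := by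
    intro i
    exact ENNReal.add_ne_top.mpr ⟨ENNReal.natCast_ne_top _, ENNReal.one_ne_top⟩
  have GEN : ∀ (S : Finset (Fin T)) (B : Fin T → Set ℕ),
      P {ω | ∀ i ∈ S, R i ω ∈ B i}
        = ∏ i ∈ S, ((((Finset.Icc 1 ((i : ℕ) + 1)).filter (· ∈ B i)).card : ℝ≥0∞)
            * ((((i : ℕ)) : ℝ≥0∞) + 1)⁻¹) := by
    intro S B
    have := master (fun r => ∀ i ∈ S, r i ∈ B i)
    rw [show {ω | ∀ i ∈ S, R i ω ∈ B i}
        = {ω | (fun r => ∀ i ∈ S, r i ∈ B i) (fun t => R t ω)} from rfl, this]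
    have hc : (((@Finset.filter (Fin T → ℕ) (fun r => ∀ i ∈ S, r i ∈ B i)
          (fun a => Classical.propDecidable _) (Stmt7.pbox T)).card : ℕ) : ℝ≥0∞)
        = (∏ i ∈ S, ((((Finset.Icc 1 ((i : ℕ) + 1)).filter (· ∈ B i)).card : ℕ) : ℝ≥0∞))
          * ∏ i ∈ Sᶜ, (((i : ℕ) : ℝ≥0∞) + 1) := by
      have e1 : @Finset.filter (Fin T → ℕ) (fun r => ∀ i ∈ S, r i ∈ B i)
            (fun a => Classical.propDecidable _) (Stmt7.pbox T)
          = Finset.filter (fun r => ∀ i ∈ S, r i ∈ B i) (Stmt7.pbox T) := by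
        ext x; simp only [Finset.mem_filter]
      rw [e1, Stmt7.card_filter_pbox S B]
      push_cast
      rfl
    refine (ENNReal.mul_left_inj hfac0 hfactop).mp ?_
    rw [mul_assoc, ENNReal.inv_mul_cancel hfac0 hfactop, mul_one]
    rw [hc]
    rw [hfacprod, ← Finset.prod_mul_prod_compl S (fun i => (((i : ℕ) : ℝ≥0∞) + 1)),
      ← mul_assoc]
    congr 1
    rw [← Finset.prod_mul_distrib]
    refine Finset.prod_congr rfl (fun i _ => ?_)
    rw [mul_assoc, ENNReal.inv_mul_cancel (hF0 i) (hFtop i), mul_one]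
  refine ⟨?_, ?_⟩
  · rw [iIndepFun_iff_measure_inter_preimage_eq_mul]
    intro S sets hsets
    have hL : (⋂ i ∈ S, R i ⁻¹' sets i) = {ω | ∀ i ∈ S, R i ω ∈ sets i} := by
      ext ω; simp
    rw [hL, GEN S sets]
    refine Finset.prod_congr rfl (fun i hi => ?_)
    have hRi : R i ⁻¹' sets i = {ω | ∀ j ∈ ({i} : Finset (Fin T)), R j ω ∈ sets j} := by
      ext ω; simp
    rw [hRi, GEN {i} sets, Finset.prod_singleton]
  · intro t r hr1 hr2
    have hset : {ω | R t ω = r}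
        = {ω | ∀ j ∈ ({t} : Finset (Fin T)), R j ω ∈ ({r} : Set ℕ)} := by
      ext ω; simp
    rw [hset, GEN {t} (fun _ => ({r} : Set ℕ)), Finset.prod_singleton]
    have hfilter : @Finset.filter ℕ (· ∈ ({r} : Set ℕ))
        (fun a => Classical.propDecidable _) (Finset.Icc 1 ((t : ℕ) + 1)) = {r} := by
      ext x
      simp only [Finset.mem_filter, Finset.mem_Icc, Set.mem_singleton_iff,
        Finset.mem_singleton]
      constructor
      · rintro ⟨_, rfl⟩; rfl
      · rintro rfl; exact ⟨⟨hr1, hr2⟩, rfl⟩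
    rw [hfilter]
    simp
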